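/- Let ω ∈ ℝⁿ and let Λ := span_ℝ {k ∈ ℤⁿ : k·ω = 0}. Then the orthogonal complement Λ⊥ is the minimal rational subspace of ℝⁿ containing ω, i.e., Λ⊥ contains ω, Λ⊥ is spanned by its intersection with ℤⁿ (equivalently by vectors with rational coordinates), and any subspace of ℝⁿ spanned by rational vectors and containing ω contains Λ⊥. -/

import Mathlib

noncomputable section Aux

variable {n : ℕ}

/-- coercion map from rational vectors to Euclidean space -/
def ratCoe (n : ℕ) : (Fin n → ℚ) → EuclideanSpace ℝ (Fin n) :=
  fun y => WithLp.toLp 2 (fun i => (y i : ℝ))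

lemma ratCoe_apply (y : Fin n → ℚ) (i : Fin n) : ratCoe n y i = (y i : ℝ) := rfl

lemma ratCoe_add (a b : Fin n → ℚ) : ratCoe n (a + b) = ratCoe n a + ratCoe n b := by
  ext i
  simp [ratCoe_apply]

lemma ratCoe_smul (q : ℚ) (a : Fin n → ℚ) : ratCoe n (q • a) = (q : ℝ) • ratCoe n a := by
  ext i
  simp [ratCoe_apply]

lemma ratCoe_zero : ratCoe n (0 : Fin n → ℚ) = 0 := by
  ext i; simp [ratCoe_apply]

lemma span_ratCoe_span (T : Set (Fin n → ℚ)) :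
    ratCoe n '' ↑(Submodule.span ℚ T) ⊆ ↑(Submodule.span ℝ (ratCoe n '' T)) := by
  rintro _ ⟨y, hy, rfl⟩
  induction hy using Submodule.span_induction with
  | mem x hx => exact Submodule.subset_span ⟨x, hx, rfl⟩
  | zero => rw [ratCoe_zero]; exact Submodule.zero_mem _
  | add a b _ _ ha hb => rw [ratCoe_add]; exact Submodule.add_mem _ ha hb
  | smul q a _ ha => rw [ratCoe_smul]; exact Submodule.smul_mem _ _ ha

lemma span_ratCoe_top : Submodule.span ℝ (ratCoe n '' Set.univ) = ⊤ := by
  rw [eq_top_iff, ← (EuclideanSpace.basisFun (Fin n) ℝ).toBasis.span_eq]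
  apply Submodule.span_le.2
  rintro _ ⟨i, rfl⟩
  apply Submodule.subset_span
  refine ⟨Pi.single i 1, Set.mem_univ _, ?_⟩
  ext j
  simp only [ratCoe_apply, OrthonormalBasis.coe_toBasis, EuclideanSpace.basisFun_apply, Pi.single_apply,
    EuclideanSpace.single_apply]
  split_ifs with h <;> simp [h]

lemma inner_ratCoe (a b : Fin n → ℚ) :
    (inner ℝ (ratCoe n a) (ratCoe n b) : ℝ) = ((dotProduct a b : ℚ) : ℝ) := by
  simp [PiLp.inner_apply, ratCoe_apply, dotProduct, RCLike.inner_apply, mul_comm]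

/-- KEY LEMMA: orthogonal complement of a rational span is spanned by rational points -/
lemma key (S : Set (EuclideanSpace ℝ (Fin n)))
    (hS : ∀ x ∈ S, ∀ i, ∃ q : ℚ, x i = (q : ℝ)) :
    (Submodule.span ℝ S)ᗮ ≤ Submodule.span ℝ
      {x : EuclideanSpace ℝ (Fin n) | x ∈ (Submodule.span ℝ S)ᗮ ∧ ∀ i, ∃ q : ℚ, x i = (q : ℝ)} := by
  set K := Submodule.span ℝ S with hK
  set T : Set (Fin n → ℚ) := ratCoe n ⁻¹' S with hT
  have hST : ratCoe n '' T = S := by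
    apply Set.image_preimage_eq_iff.2
    intro x hx
    exact ⟨fun i => Classical.choose (hS x hx i), by
      ext i; exact (Classical.choose_spec (hS x hx i)).symm⟩
  set B : LinearMap.BilinForm ℚ (Fin n → ℚ) := Matrix.toBilin' (1 : Matrix (Fin n) (Fin n) ℚ)
    with hB
  have hBapp : ∀ a b : Fin n → ℚ, B a b = dotProduct a b := by
    intro a b
    simp [hB, Matrix.toBilin'_apply', Matrix.one_mulVec]
  have hrefl : B.IsRefl := by
    intro a b h
    rw [hBapp] at h ⊢
    rwa [dotProduct_comm]
  set U : Submodule ℚ (Fin n → ℚ) := Submodule.span ℚ T with hU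
  have hnd : (B.restrict U).Nondegenerate := by
    refine LinearMap.BilinForm.Nondegenerate.ofSeparatingLeft ?_
    rintro ⟨x, hx⟩ h
    have h0 : B x x = 0 := h ⟨x, hx⟩
    rw [hBapp] at h0
    have : ∀ i ∈ Finset.univ, x i * x i = 0 := by
      intro i _
      have := (Finset.sum_eq_zero_iff_of_nonneg (fun i _ => mul_self_nonneg (x i))).1 h0 i
        (Finset.mem_univ i)
      exact this
    have hx0 : x = 0 := funext fun i => mul_self_eq_zero.1 (this i (Finset.mem_univ i))
    exact Subtype.ext hx0
  have hcompl := B.isCompl_orthogonal_of_restrict_nondegenerate hrefl hnd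
  have hsup : U ⊔ B.orthogonal U = ⊤ := hcompl.sup_eq_top
  -- the rational orthogonal maps into Kᗮ
  have horth : ratCoe n '' ↑(B.orthogonal U) ⊆
      {x : EuclideanSpace ℝ (Fin n) | x ∈ Kᗮ ∧ ∀ i, ∃ q : ℚ, x i = (q : ℝ)} := by
    rintro _ ⟨y, hy, rfl⟩
    refine ⟨?_, fun i => ⟨y i, rfl⟩⟩
    rw [Submodule.mem_orthogonal]
    intro u hu
    induction hu using Submodule.span_induction with
    | mem s hs =>
      rw [← hST] at hs
      obtain ⟨t, ht, rfl⟩ := hs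
      rw [inner_ratCoe]
      have h0 : B t y = 0 := hy t (Submodule.subset_span ht)
      rw [hBapp] at h0
      rw [h0]
      norm_num
    | zero => simp
    | add a b _ _ ha hb => rw [inner_add_left, ha, hb, add_zero]
    | smul r a _ ha => rw [inner_smul_left, ha, mul_zero]
  intro x hx
  have htop : (⊤ : Submodule ℝ (EuclideanSpace ℝ (Fin n))) ≤
      Submodule.span ℝ S ⊔ Submodule.span ℝ (ratCoe n '' ↑(B.orthogonal U)) := by
    rw [← span_ratCoe_top]
    apply Submodule.span_le.2
    rintro _ ⟨y, -, rfl⟩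
    have hy : y ∈ U ⊔ B.orthogonal U := by rw [hsup]; trivial
    obtain ⟨a, ha, b, hb, rfl⟩ := Submodule.mem_sup.1 hy
    rw [ratCoe_add]
    apply Submodule.add_mem
    · apply Submodule.mem_sup_left
      have h1 : ratCoe n a ∈ ↑(Submodule.span ℝ (ratCoe n '' T)) :=
        span_ratCoe_span T ⟨a, ha, rfl⟩
      rwa [hST] at h1
    · exact Submodule.mem_sup_right (Submodule.subset_span ⟨b, hb, rfl⟩)
  obtain ⟨a, ha, b, hb, hab⟩ := Submodule.mem_sup.1 (htop (Submodule.mem_top : x ∈ ⊤))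
  have hbK : b ∈ Kᗮ := by
    have h2 : Submodule.span ℝ (ratCoe n '' ↑(B.orthogonal U)) ≤ Kᗮ :=
      Submodule.span_le.2 (fun z hz => (horth hz).1)
    exact h2 hb
  have ha0 : a = 0 := by
    have haK : a ∈ Kᗮ := by
      have h3 : a = x - b := by rw [← hab]; abel
      rw [h3]; exact Submodule.sub_mem _ hx hbK
    exact (Submodule.disjoint_def.1 K.orthogonal_disjoint) a ha haK
  rw [← hab, ha0, zero_add]
  exact Submodule.span_mono horth hb

end Aux

lemma scaleInt (x : EuclideanSpace ℝ (Fin n)) (h : ∀ i, ∃ q : ℚ, x i = (q : ℝ)) :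
    ∃ N : ℤ, 0 < N ∧ ∀ i, ∃ k : ℤ, (N : ℝ) * x i = (k : ℝ) := by
  choose q hq using h
  refine ⟨∏ i, ((q i).den : ℤ), ?_, ?_⟩
  · exact Finset.prod_pos fun i _ => by exact_mod_cast (q i).den_pos
  · intro i
    have hd : ((q i).den : ℤ) ∣ ∏ j, ((q j).den : ℤ) :=
      Finset.dvd_prod_of_mem _ (Finset.mem_univ i)
    obtain ⟨m, hm⟩ := hd
    refine ⟨m * (q i).num, ?_⟩
    rw [hq i]
    have key : ((∏ j, ((q j).den : ℤ) : ℤ) : ℚ) * q i = ((m * (q i).num : ℤ) : ℚ) := by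
      rw [hm]
      have hden : ((q i).den : ℚ) ≠ 0 := by exact_mod_cast (q i).den_pos.ne'
      have hqd : ((q i).den : ℚ) * (q i) = ((q i).num : ℚ) := by
        rw [mul_comm, Rat.mul_den_eq_num]
      push_cast
      rw [mul_assoc, mul_comm ((m : ℚ)) (q i), ← mul_assoc, hqd]
      ring
    exact_mod_cast congrArg (fun r : ℚ => (r : ℝ)) key


open EuclideanSpace in
/-- Λ⊥ is the minimal rational subspace of ℝⁿ containing ω:
    it contains ω, it is spanned by its integer points, and it is contained in any
    subspace spanned by rational vectors that contains ω. -/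
theorem stmt_1 (n : ℕ) (hn : 2 ≤ n) (ω : EuclideanSpace ℝ (Fin n))
    (Λ : Submodule ℝ (EuclideanSpace ℝ (Fin n)))
    (hΛ : Λ = Submodule.span ℝ
      {x : EuclideanSpace ℝ (Fin n) | (∀ i, ∃ k : ℤ, x i = (k : ℝ)) ∧ inner ℝ x ω = (0 : ℝ)}) :
    ω ∈ Λᗮ ∧
    Λᗮ = Submodule.span ℝ {x : EuclideanSpace ℝ (Fin n) | x ∈ Λᗮ ∧ ∀ i, ∃ k : ℤ, x i = (k : ℝ)} ∧
    ∀ V : Submodule ℝ (EuclideanSpace ℝ (Fin n)),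
      (∃ S : Set (EuclideanSpace ℝ (Fin n)),
          (∀ x ∈ S, ∀ i, ∃ q : ℚ, x i = (q : ℝ)) ∧ V = Submodule.span ℝ S) →
      ω ∈ V → Λᗮ ≤ V := by
  refine ⟨?_, ?_, ?_⟩
  · -- ω ∈ Λᗮ
    rw [Submodule.mem_orthogonal]
    intro u hu
    rw [hΛ] at hu
    induction hu using Submodule.span_induction with
    | mem s hs => exact hs.2
    | zero => simp
    | add a b _ _ ha hb => rw [inner_add_left, ha, hb, add_zero]
    | smul r a _ ha => rw [inner_smul_left, ha, mul_zero]
  · -- Λᗮ spanned by its integer points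
    apply le_antisymm
    · have hrat : ∀ x ∈ {x : EuclideanSpace ℝ (Fin n) |
          (∀ i, ∃ k : ℤ, x i = (k : ℝ)) ∧ inner ℝ x ω = (0 : ℝ)}, ∀ i, ∃ q : ℚ, x i = (q : ℝ) := by
        rintro x hx i
        obtain ⟨k, hk⟩ := hx.1 i
        exact ⟨(k : ℚ), by rw [hk]; push_cast; ring⟩
      have h1 := key _ hrat
      rw [← hΛ] at h1
      refine h1.trans (Submodule.span_le.2 ?_)
      rintro x ⟨hxW, hxq⟩
      obtain ⟨N, hN, hNk⟩ := scaleInt x hxq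
      have hNR : (N : ℝ) ≠ 0 := by exact_mod_cast hN.ne'
      have hmem : ((N : ℝ) • x) ∈ {x : EuclideanSpace ℝ (Fin n) | x ∈ Λᗮ ∧
          ∀ i, ∃ k : ℤ, x i = (k : ℝ)} := by
        refine ⟨Submodule.smul_mem _ _ hxW, fun i => ?_⟩
        obtain ⟨k, hk⟩ := hNk i
        exact ⟨k, by simpa using hk⟩
      have hxe : x = (N : ℝ)⁻¹ • ((N : ℝ) • x) := by
        rw [smul_smul, inv_mul_cancel₀ hNR, one_smul]
      rw [hxe]
      exact Submodule.smul_mem _ _ (Submodule.subset_span hmem)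
    · exact Submodule.span_le.2 fun x hx => hx.1
  · rintro V ⟨S, hSrat, hV⟩ hωV
    have h1 : Vᗮ ≤ Λ := by
      have h2 := key S hSrat
      rw [← hV] at h2
      refine h2.trans (Submodule.span_le.2 ?_)
      rintro x ⟨hxV, hxq⟩
      obtain ⟨N, hN, hNk⟩ := scaleInt x hxq
      have hNR : (N : ℝ) ≠ 0 := by exact_mod_cast hN.ne'
      have hx0 : inner ℝ x ω = (0 : ℝ) := by
        have h3 := (Submodule.mem_orthogonal V x).1 hxV ω hωV
        rwa [real_inner_comm] at h3
      have hmem : ((N : ℝ) • x) ∈ {x : EuclideanSpace ℝ (Fin n) |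
          (∀ i, ∃ k : ℤ, x i = (k : ℝ)) ∧ inner ℝ x ω = (0 : ℝ)} := by
        refine ⟨fun i => ?_, by rw [inner_smul_left]; simp [hx0]⟩
        obtain ⟨k, hk⟩ := hNk i
        exact ⟨k, by simpa using hk⟩
      have hxe : x = (N : ℝ)⁻¹ • ((N : ℝ) • x) := by
        rw [smul_smul, inv_mul_cancel₀ hNR, one_smul]
      rw [hΛ, hxe]
      exact Submodule.smul_mem _ _ (Submodule.subset_span hmem)
    calc Λᗮ ≤ Vᗮᗮ := Submodule.orthogonal_le h1
      _ = V := Submodule.orthogonal_orthogonal V
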